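/- Let F : (0,∞) → ℝ be a C¹ function such that F(z)/z → a as z → ∞ for some a < 0, and inf_{z>0} F′(z) > −∞. Then there exists a nonnegative integer k₀ such that for every integer k ≥ k₀ the equation cot z = F(z) has exactly one solution z in the interval (kπ, (k+1)π). -/

import Mathlib

set_option maxHeartbeats 1000000

open Set Filter Real

private lemma cot_hasDerivAt {z : ℝ} (hz : Real.sin z ≠ 0) :
    HasDerivAt (fun z => Real.cos z / Real.sin z) (-1 / Real.sin z ^ 2) z := by
  have h : HasDerivAt (fun z => Real.cos z / Real.sin z) ((-Real.sin z * Real.sin z - Real.cos z * Real.cos z) / Real.sin z ^ 2) z := (Real.hasDerivAt_cos z).div (Real.hasDerivAt_sin z) hz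
  convert h using 1
  have := Real.sin_sq_add_cos_sq z
  field_simp
  nlinarith [Real.sin_sq_add_cos_sq z]

private lemma sin_ne_zero_of_mem {k : ℕ} {z : ℝ}
    (hz : z ∈ Set.Ioo ((k : ℝ) * Real.pi) (((k : ℝ) + 1) * Real.pi)) :
    Real.sin z ≠ 0 := by
  rw [Real.sin_ne_zero_iff]
  intro n hn
  rw [← hn] at hz
  obtain ⟨h1, h2⟩ := hz
  have pi_pos := Real.pi_pos
  have hkn : (k : ℝ) < n := by
    exact lt_of_mul_lt_mul_right h1 pi_pos.le
  have hnk : (n : ℝ) < (k : ℝ) + 1 := by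
    exact lt_of_mul_lt_mul_right h2 pi_pos.le
  have h1' : (k : ℤ) < n := by exact_mod_cast hkn
  have h2' : n < (k : ℤ) + 1 := by exact_mod_cast hnk
  omega

theorem unique_solution_cot_eq
    (F : ℝ → ℝ) (hF : ContDiffOn ℝ 1 F (Set.Ioi 0))
    (a : ℝ) (ha : a < 0)
    (hlim : Filter.Tendsto (fun z => F z / z) Filter.atTop (nhds a))
    (hinf : ∃ m : ℝ, ∀ z > 0, m ≤ deriv F z) :
    ∃ k₀ : ℕ, ∀ k ≥ k₀, ∃! z : ℝ,
      z ∈ Set.Ioo ((k : ℝ) * Real.pi) (((k : ℝ) + 1) * Real.pi) ∧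
      Real.cos z / Real.sin z = F z := by
  obtain ⟨m, hm⟩ := hinf
  set M : ℝ := |m| + 1 with hM
  have hMpos : 0 < M := by positivity
  have pi_pos := Real.pi_pos
  have ha2 : a < a / 2 := by linarith
  obtain ⟨Z, hZ⟩ := eventually_atTop.mp (hlim.eventually_lt_const ha2)
  set X : ℝ := max Z (2 * M / (-a))
  refine ⟨max 1 ⌈X / Real.pi⌉₊, fun k hk => ?_⟩
  have hk1 : 1 ≤ k := le_trans (le_max_left _ _) hk
  have hkX : X ≤ (k : ℝ) * Real.pi := by
    have h1 : (⌈X / Real.pi⌉₊ : ℝ) ≤ (k : ℝ) := by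
      exact_mod_cast le_trans (le_max_right _ _) hk
    have h2 : X / Real.pi ≤ (k : ℝ) := le_trans (Nat.le_ceil _) h1
    calc X = X / Real.pi * Real.pi := by field_simp
    _ ≤ (k : ℝ) * Real.pi := by nlinarith
  have hkpos : 0 < (k : ℝ) * Real.pi := by
    have : (1:ℝ) ≤ (k:ℝ) := by exact_mod_cast hk1
    nlinarith
  have hkZ : Z ≤ (k : ℝ) * Real.pi := le_trans (le_max_left _ _) hkX
  have hkM : (a / 2) * ((k : ℝ) * Real.pi) ≤ -M := by
    have h2 : 2 * M / (-a) ≤ (k : ℝ) * Real.pi := le_trans (le_max_right _ _) hkX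
    have hna : 0 < -a := by linarith
    rw [div_le_iff₀ hna] at h2
    nlinarith
  -- F is small on the interval
  have hFlt : ∀ z ∈ Set.Ioo ((k : ℝ) * Real.pi) (((k : ℝ) + 1) * Real.pi), F z < -M := by
    intro z hz
    have hz0 : 0 < z := lt_trans hkpos hz.1
    have h1 : F z / z < a / 2 := hZ z (le_trans hkZ hz.1.le)
    have h2 : F z < (a / 2) * z := by
      rw [div_lt_iff₀ hz0] at h1; linarith
    have h3 : (a / 2) * z < (a / 2) * ((k : ℝ) * Real.pi) := by nlinarith [hz.1]
    linarith
  have hsub : Set.Ioo ((k : ℝ) * Real.pi) (((k : ℝ) + 1) * Real.pi) ⊆ Set.Ioi 0 := by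
    intro z hz; exact lt_trans hkpos hz.1
  have hFdiff : ∀ z ∈ Set.Ioo ((k : ℝ) * Real.pi) (((k : ℝ) + 1) * Real.pi),
      HasDerivAt F (deriv F z) z := by
    intro z hz
    have : DifferentiableAt ℝ F z :=
      ((hF.differentiableOn one_ne_zero) z (hsub hz)).differentiableAt
        (isOpen_Ioi.mem_nhds (hsub hz))
    exact this.hasDerivAt
  -- cot is strictly decreasing on the interval
  have hcot_anti : StrictAntiOn (fun z => Real.cos z / Real.sin z)
      (Set.Ioo ((k : ℝ) * Real.pi) (((k : ℝ) + 1) * Real.pi)) := by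
    apply strictAntiOn_of_deriv_neg (convex_Ioo _ _)
    · exact (Real.continuousOn_cos.div Real.continuousOn_sin
        fun z hz => sin_ne_zero_of_mem hz)
    · intro x hx
      rw [interior_Ioo] at hx
      have hs := sin_ne_zero_of_mem hx
      rw [(cot_hasDerivAt hs).deriv]
      have : 0 < Real.sin x ^ 2 := by positivity
      exact div_neg_of_neg_of_pos (by norm_num) this
  -- existence
  have hFcont : ContinuousOn F (Set.Icc ((k : ℝ) * Real.pi) (((k : ℝ) + 1) * Real.pi)) := by
    apply hF.continuousOn.mono
    intro z hz
    exact lt_of_lt_of_le hkpos hz.1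
  have hhcont : ContinuousOn (fun z => Real.cos z - F z * Real.sin z)
      (Set.Icc ((k : ℝ) * Real.pi) (((k : ℝ) + 1) * Real.pi)) :=
    Real.continuousOn_cos.sub (hFcont.mul Real.continuousOn_sin)
  have hle : (k : ℝ) * Real.pi ≤ ((k : ℝ) + 1) * Real.pi := by nlinarith
  have hck : Real.cos ((k : ℝ) * Real.pi) = (-1 : ℝ) ^ k := by
    simpa using Real.cos_nat_mul_pi_sub 0 k
  have hck1 : Real.cos (((k : ℝ) + 1) * Real.pi) = (-1 : ℝ) ^ (k + 1) := by
    have := Real.cos_nat_mul_pi_sub 0 (k + 1)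
    push_cast at this ⊢
    simpa using this
  have hsk : Real.sin ((k : ℝ) * Real.pi) = 0 := by
    have := Real.sin_int_mul_pi (k : ℤ)
    push_cast at this; exact this
  have hsk1 : Real.sin (((k : ℝ) + 1) * Real.pi) = 0 := by
    have := Real.sin_int_mul_pi ((k : ℤ) + 1)
    push_cast at this; exact this
  have hhk : (fun z => Real.cos z - F z * Real.sin z) ((k : ℝ) * Real.pi) = (-1 : ℝ) ^ k := by
    simp [hck, hsk]
  have hhk1 : (fun z => Real.cos z - F z * Real.sin z) (((k : ℝ) + 1) * Real.pi)
      = (-1 : ℝ) ^ (k + 1) := by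
    simp [hck1, hsk1]
  have hex : ∃ z ∈ Set.Ioo ((k : ℝ) * Real.pi) (((k : ℝ) + 1) * Real.pi),
      Real.cos z - F z * Real.sin z = 0 := by
    rcases Nat.even_or_odd k with he | ho
    · have h0 : (0:ℝ) ∈ Set.Ioo ((fun z => Real.cos z - F z * Real.sin z) (((k : ℝ) + 1) * Real.pi))
          ((fun z => Real.cos z - F z * Real.sin z) ((k : ℝ) * Real.pi)) := by
        rw [hhk, hhk1, he.neg_one_pow]
        have : Odd (k + 1) := Even.add_one he
        rw [this.neg_one_pow]
        constructor <;> norm_num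
      obtain ⟨z, hz, hz0⟩ := intermediate_value_Ioo' hle hhcont h0
      exact ⟨z, hz, hz0⟩
    · have h0 : (0:ℝ) ∈ Set.Ioo ((fun z => Real.cos z - F z * Real.sin z) ((k : ℝ) * Real.pi))
          ((fun z => Real.cos z - F z * Real.sin z) (((k : ℝ) + 1) * Real.pi)) := by
        rw [hhk, hhk1, ho.neg_one_pow]
        have : Even (k + 1) := Odd.add_one ho
        rw [this.neg_one_pow]
        constructor <;> norm_num
      obtain ⟨z, hz, hz0⟩ := intermediate_value_Ioo hle hhcont h0
      exact ⟨z, hz, hz0⟩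
  obtain ⟨z₀, hz₀, hz₀0⟩ := hex
  have hz₀eq : Real.cos z₀ / Real.sin z₀ = F z₀ := by
    have hs := sin_ne_zero_of_mem hz₀
    field_simp
    linarith
  refine ⟨z₀, ⟨hz₀, hz₀eq⟩, ?_⟩
  -- uniqueness
  have key : ∀ z₁ z₂, z₁ ∈ Set.Ioo ((k : ℝ) * Real.pi) (((k : ℝ) + 1) * Real.pi) →
      Real.cos z₁ / Real.sin z₁ = F z₁ →
      z₂ ∈ Set.Ioo ((k : ℝ) * Real.pi) (((k : ℝ) + 1) * Real.pi) →
      Real.cos z₂ / Real.sin z₂ = F z₂ → z₁ < z₂ → False := by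
    intro z₁ z₂ h1 he1 h2 he2 hlt
    have hIcc : Set.Icc z₁ z₂ ⊆ Set.Ioo ((k : ℝ) * Real.pi) (((k : ℝ) + 1) * Real.pi) := by
      intro x hx
      exact ⟨lt_of_lt_of_le h1.1 hx.1, lt_of_le_of_lt hx.2 h2.2⟩
    -- cot ≤ -M on Icc z₁ z₂
    have hcotM : ∀ x ∈ Set.Icc z₁ z₂, Real.cos x / Real.sin x ≤ -M := by
      intro x hx
      have hc1 : Real.cos z₁ / Real.sin z₁ ≤ -M := by
        rw [he1]; exact (hFlt z₁ h1).le
      rcases eq_or_lt_of_le hx.1 with rfl | hlt'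
      · exact hc1
      · exact le_trans (hcot_anti h1 (hIcc hx) hlt').le hc1
    -- g := cot - F is strictly decreasing on Icc z₁ z₂
    have hganti : StrictAntiOn (fun x => Real.cos x / Real.sin x - F x) (Set.Icc z₁ z₂) := by
      apply strictAntiOn_of_deriv_neg (convex_Icc _ _)
      · apply ContinuousOn.sub
        · exact Real.continuousOn_cos.div Real.continuousOn_sin
            fun x hx => sin_ne_zero_of_mem (hIcc hx)
        · exact hFcont.mono fun x hx => (Set.Ioo_subset_Icc_self (hIcc hx))
      · intro x hx
        rw [interior_Icc] at hx
        have hxI := hIcc (Set.Ioo_subset_Icc_self hx)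
        have hs := sin_ne_zero_of_mem hxI
        have hd : HasDerivAt (fun x => Real.cos x / Real.sin x - F x)
            (-1 / Real.sin x ^ 2 - deriv F x) x :=
          (cot_hasDerivAt hs).sub (hFdiff x hxI)
        rw [hd.deriv]
        have hx0 : 0 < x := hsub hxI
        have hmx : m ≤ deriv F x := hm x hx0
        have hid : 1 / Real.sin x ^ 2 = 1 + (Real.cos x / Real.sin x) ^ 2 := by
          field_simp
          linarith [Real.sin_sq_add_cos_sq x]
        have hcx : Real.cos x / Real.sin x ≤ -M := hcotM x (Set.Ioo_subset_Icc_self hx)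
        have hsq : M ^ 2 ≤ (Real.cos x / Real.sin x) ^ 2 := by nlinarith
        have : -1 / Real.sin x ^ 2 = -(1 / Real.sin x ^ 2) := by ring
        rw [this, hid]
        have habs : -m ≤ |m| := neg_le_abs m
        nlinarith
    have hg1 : (fun x => Real.cos x / Real.sin x - F x) z₁ = 0 := by simp [he1]
    have hg2 : (fun x => Real.cos x / Real.sin x - F x) z₂ = 0 := by simp [he2]
    have := hganti (Set.left_mem_Icc.mpr hlt.le) (Set.right_mem_Icc.mpr hlt.le) hlt
    rw [hg1, hg2] at this
    exact lt_irrefl 0 this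
  intro z hz
  rcases lt_trichotomy z z₀ with h | h | h
  · exact absurd (key z z₀ hz.1 hz.2 hz₀ hz₀eq h) not_false
  · exact h
  · exact absurd (key z₀ z hz₀ hz₀eq hz.1 hz.2 h) not_false
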